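/- arXiv:1002.4384 — 2 statements merged into one kernel-verified Lean document; each statement's English description precedes it below -/
import Mathlib

section
/- For n = 3, the determinant of the 3×3 Okada matrix (a_{i,j})_{1≤i,j≤3} equals b_3 = ∏_{1≤i≤j≤k≤3} ((1-q^{i+j+k-1})/(1-q^{i+j+k-2}))^2 in ℚ(q). -/
open Finset

/-- The indeterminate `q` in the field `ℚ(q)` of rational functions. -/
noncomputable def q : RatFunc ℚ := RatFunc.X

/-- The q-binomial coefficient, as an element of `ℚ(q)`. -/
noncomputable def qbinom (n k : ℕ) : RatFunc ℚ :=
  ∏ m ∈ Finset.range k, (1 - q ^ (n - m)) / (1 - q ^ (k - m))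

/-- The Okada matrix entry `a_{i,j}` (1-based indices). -/
noncomputable def okA (i j : ℕ) : RatFunc ℚ :=
  q ^ (i + j - 1) * (qbinom (i + j - 2) (i - 1) + q * qbinom (i + j - 1) i)
    + (if i = j then 1 + q ^ i else 0) - (if i = j + 1 then 1 else 0)

/-- The conjectured product `b_n`. -/
noncomputable def okB (n : ℕ) : RatFunc ℚ :=
  ∏ i ∈ Finset.Icc 1 n, ∏ j ∈ Finset.Icc i n, ∏ k ∈ Finset.Icc j n,
    ((1 - q ^ (i + j + k - 1)) / (1 - q ^ (i + j + k - 2))) ^ 2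

lemma one_sub_q_pow_ne (k : ℕ) (hk : 0 < k) : (1 : RatFunc ℚ) - q ^ k ≠ 0 := by
  have h : (1 : RatFunc ℚ) - q ^ k =
      algebraMap (Polynomial ℚ) (RatFunc ℚ) (1 - Polynomial.X ^ k) := by
    simp [q, RatFunc.algebraMap_X]
  rw [h]
  apply RatFunc.algebraMap_ne_zero
  intro hc
  have : ((1 : Polynomial ℚ) - Polynomial.X ^ k).natDegree = 0 := by rw [hc]; simp
  rw [Polynomial.natDegree_sub_eq_right_of_natDegree_lt (by simp; omega)] at this
  simp at this; omega

lemma hq1 : (1 : RatFunc ℚ) - q ≠ 0 := by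
  simpa using one_sub_q_pow_ne 1 one_pos
lemma hq2 : (1 : RatFunc ℚ) - q ^ 2 ≠ 0 := one_sub_q_pow_ne 2 (by norm_num)
lemma hq3 : (1 : RatFunc ℚ) - q ^ 3 ≠ 0 := one_sub_q_pow_ne 3 (by norm_num)
lemma hq4 : (1 : RatFunc ℚ) - q ^ 4 ≠ 0 := one_sub_q_pow_ne 4 (by norm_num)
lemma hq5 : (1 : RatFunc ℚ) - q ^ 5 ≠ 0 := one_sub_q_pow_ne 5 (by norm_num)
lemma hq6 : (1 : RatFunc ℚ) - q ^ 6 ≠ 0 := one_sub_q_pow_ne 6 (by norm_num)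
lemma hq7 : (1 : RatFunc ℚ) - q ^ 7 ≠ 0 := one_sub_q_pow_ne 7 (by norm_num)
lemma hq8 : (1 : RatFunc ℚ) - q ^ 8 ≠ 0 := one_sub_q_pow_ne 8 (by norm_num)

lemma range2 : Finset.range 2 = ({0,1} : Finset ℕ) := rfl
lemma range3 : Finset.range 3 = ({0,1,2} : Finset ℕ) := rfl

lemma qb00 : qbinom 0 0 = 1 := by simp [qbinom]
lemma qb10 : qbinom 1 0 = 1 := by simp [qbinom]
lemma qb20 : qbinom 2 0 = 1 := by simp [qbinom]
lemma qb11 : qbinom 1 1 = 1 := by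
  simp [qbinom, Finset.prod_range_one, div_self hq1]
lemma qb21 : qbinom 2 1 = 1 + q := by
  simp only [qbinom, Finset.prod_range_one, Nat.sub_zero]
  rw [pow_one, div_eq_iff hq1]; ring
lemma qb31 : qbinom 3 1 = 1 + q + q ^ 2 := by
  simp only [qbinom, Finset.prod_range_one, Nat.sub_zero]
  rw [pow_one, div_eq_iff hq1]; ring
lemma qb22 : qbinom 2 2 = 1 := by
  norm_num [qbinom, range2, Finset.prod_insert, Finset.mem_singleton]
  exact ⟨hq2, hq1⟩
lemma qb32 : qbinom 3 2 = 1 + q + q ^ 2 := by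
  norm_num [qbinom, range2, Finset.prod_insert, Finset.mem_singleton]
  rw [div_eq_iff (mul_ne_zero hq2 hq1)]; ring
lemma qb42 : qbinom 4 2 = (1 + q ^ 2) * (1 + q + q ^ 2) := by
  norm_num [qbinom, range2, Finset.prod_insert, Finset.mem_singleton]
  rw [div_eq_iff (mul_ne_zero hq2 hq1)]; ring
lemma qb33 : qbinom 3 3 = 1 := by
  norm_num [qbinom, range3, Finset.prod_insert, Finset.mem_insert, Finset.mem_singleton]
  exact ⟨hq3, hq2, hq1⟩
lemma qb43 : qbinom 4 3 = 1 + q + q ^ 2 + q ^ 3 := by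
  norm_num [qbinom, range3, Finset.prod_insert, Finset.mem_insert, Finset.mem_singleton]
  rw [div_eq_iff (mul_ne_zero hq3 (mul_ne_zero hq2 hq1))]; ring
lemma qb53 : qbinom 5 3 = (1 + q ^ 2) * (1 + q + q ^ 2 + q ^ 3 + q ^ 4) := by
  norm_num [qbinom, range3, Finset.prod_insert, Finset.mem_insert, Finset.mem_singleton]
  rw [div_eq_iff (mul_ne_zero hq3 (mul_ne_zero hq2 hq1))]; ring

set_option maxHeartbeats 2000000 in
lemma okB3 : okB 3 = ((1 + q) * (1 + q ^ 2) * (1 + q ^ 3) * (1 + q ^ 4)) ^ 2 := by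
  have e1 : Finset.Icc 1 3 = ({1,2,3} : Finset ℕ) := rfl
  have e2 : Finset.Icc 2 3 = ({2,3} : Finset ℕ) := rfl
  have e3 : Finset.Icc 3 3 = ({3} : Finset ℕ) := rfl
  norm_num [okB, e1, e2, e3, Finset.prod_insert, Finset.mem_insert, Finset.mem_singleton,
    Finset.prod_singleton]
  simp only [div_pow, div_mul_div_comm]
  rw [div_eq_iff]
  · ring
  · simp [mul_eq_zero, pow_eq_zero_iff, hq1, hq2, hq3, hq4, hq5, hq6, hq7, hq8]

set_option maxHeartbeats 2000000 in
theorem okada_det_three :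
    Matrix.det (Matrix.of fun i j : Fin 3 => okA (i.1 + 1) (j.1 + 1)) = okB 3 := by
  have a11 : okA 1 1 = 1 + 2 * q + q ^ 2 := by
    norm_num [okA, qb00, qb11]
    try ring
  have a12 : okA 1 2 = q ^ 2 * (1 + q * (1 + q)) := by
    norm_num [okA, qb10, qb21]
  have a13 : okA 1 3 = q ^ 3 * (1 + q * (1 + q + q ^ 2)) := by
    norm_num [okA, qb20, qb31]
  have a21 : okA 2 1 = q ^ 2 * (1 + q) - 1 := by
    norm_num [okA, qb11, qb22]
    try ring
  have a22 : okA 2 2 = q ^ 3 * ((1 + q) + q * (1 + q + q ^ 2)) + (1 + q ^ 2) := by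
    norm_num [okA, qb21, qb32]
  have a23 : okA 2 3 = q ^ 4 * ((1 + q + q ^ 2) + q * ((1 + q ^ 2) * (1 + q + q ^ 2))) := by
    norm_num [okA, qb31, qb42]
  have a31 : okA 3 1 = q ^ 3 * (1 + q) := by
    norm_num [okA, qb22, qb33]
    try ring
  have a32 : okA 3 2 = q ^ 4 * ((1 + q + q ^ 2) + q * (1 + q + q ^ 2 + q ^ 3)) - 1 := by
    norm_num [okA, qb32, qb43]
  have a33 : okA 3 3 = q ^ 5 * ((1 + q ^ 2) * (1 + q + q ^ 2)
      + q * ((1 + q ^ 2) * (1 + q + q ^ 2 + q ^ 3 + q ^ 4))) + (1 + q ^ 3) := by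
    norm_num [okA, qb42, qb53]
  rw [Matrix.det_fin_three]
  simp only [Matrix.of_apply, Fin.isValue, Fin.val_zero, Fin.val_one, Fin.val_two]
  norm_num [a11, a12, a13, a21, a22, a23, a31, a32, a33, okB3]
  ring
end

section
/- Holonomic-ansatz reduction lemma: Let K be a field, a : ℕ+ × ℕ+ → K, and b : ℕ → K with b_0 = 1 and b_n ≠ 0 for all n. Suppose there exists c : ℕ+ × ℕ+ → K such that for all n ≥ 1: (i) c_{n,n} = 1; (ii) ∑_{j=1}^n c_{n,j} a_{i,j} = 0 for all 1 ≤ i < n; (iii) ∑_{j=1}^n c_{n,j} a_{n,j} = b_n / b_{n-1}. Then det(a_{i,j})_{1≤i,j≤n} = b_n for all n ≥ 1. -/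
open Finset

/-- Holonomic-ansatz reduction lemma: a certificate `c` satisfying the three
identities forces the determinant evaluation `det = b_n` for all `n ≥ 1`.
Entries are indexed 1-based. -/
theorem holonomic_ansatz_reduction {K : Type*} [Field K]
    (a : ℕ → ℕ → K) (b : ℕ → K) (hb0 : b 0 = 1) (hb : ∀ n, b n ≠ 0)
    (c : ℕ → ℕ → K)
    (h1 : ∀ n, 1 ≤ n → c n n = 1)
    (h2 : ∀ n, 1 ≤ n → ∀ i, 1 ≤ i → i < n →
      ∑ j ∈ Finset.Icc 1 n, c n j * a i j = 0)
    (h3 : ∀ n, 1 ≤ n →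
      ∑ j ∈ Finset.Icc 1 n, c n j * a n j = b n / b (n - 1)) :
    ∀ n, 1 ≤ n →
      Matrix.det (Matrix.of fun i j : Fin n => a (i.1 + 1) (j.1 + 1)) = b n := by
  have hsum : ∀ (m : ℕ) (g : ℕ → K),
      ∑ j ∈ Finset.Icc 1 (m + 1), g j = ∑ j : Fin (m + 1), g (j.1 + 1) := by
    intro m g
    rw [← Finset.Ico_add_one_right_eq_Icc, Finset.sum_Ico_eq_sum_range,
      Fin.sum_univ_eq_sum_range (fun j => g (j + 1))]
    simp [add_comm 1]
  intro n hn
  induction n with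
  | zero => omega
  | succ n ih =>
    rcases Nat.eq_zero_or_pos n with rfl | hn'
    · rw [Matrix.det_fin_one]
      have h := h3 1 le_rfl
      simp only [Finset.Icc_self, Finset.sum_singleton, h1 1 le_rfl, one_mul,
        Nat.sub_self, hb0, div_one] at h
      simpa using h
    · have IH := ih hn'
      set A : Matrix (Fin (n + 1)) (Fin (n + 1)) K :=
        Matrix.of fun i j : Fin (n + 1) => a (i.1 + 1) (j.1 + 1) with hA
      set B := A.updateCol (Fin.last n)
        (fun k => ∑ i : Fin (n + 1), c (n + 1) (i.1 + 1) • A k i) with hB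
      have hdetB : B.det = A.det := by
        rw [hB, Matrix.det_updateCol_sum A (Fin.last n) (fun i => c (n + 1) (i.1 + 1))]
        simp [Fin.val_last, h1 (n + 1) (by omega)]
      -- entries of the updated column
      have hcol : ∀ k : Fin (n + 1), B k (Fin.last n) =
          ∑ j ∈ Finset.Icc 1 (n + 1), c (n + 1) j * a (k.1 + 1) j := by
        intro k
        rw [hB, Matrix.updateCol_self, hsum n (fun j => c (n + 1) j * a (k.1 + 1) j)]
        simp [hA, smul_eq_mul]
      have hcol0 : ∀ k : Fin (n + 1), k ≠ Fin.last n → B k (Fin.last n) = 0 := by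
        intro k hk
        rw [hcol k]
        exact h2 (n + 1) (by omega) (k.1 + 1) (by omega)
          (by have := Fin.lt_last_iff_ne_last.mpr hk; omega)
      have hcoln : B (Fin.last n) (Fin.last n) = b (n + 1) / b n := by
        rw [hcol]
        simp only [Fin.val_last]
        rw [h3 (n + 1) (by omega)]
        simp
      -- expand along the last column
      rw [← hdetB, Matrix.det_succ_column B (Fin.last n),
        Finset.sum_eq_single (Fin.last n)]
      · have hsub : B.submatrix (Fin.last n).succAbove (Fin.last n).succAbove =
            Matrix.of fun i j : Fin n => a (i.1 + 1) (j.1 + 1) := by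
          ext i j
          simp only [Matrix.submatrix_apply, Fin.succAbove_last]
          rw [hB, Matrix.updateCol_ne (by simp [Fin.ext_iff, Fin.castSucc]; omega)]
          simp [hA]
        rw [hsub, IH, hcoln]
        have : ((-1 : K)) ^ ((Fin.last n : ℕ) + (Fin.last n : ℕ)) = 1 := by
          simp [Fin.val_last, ← two_mul, pow_mul]
        rw [this, one_mul, div_mul_cancel₀ _ (hb n)]
      · intro i _ hi
        rw [hcol0 i hi]
        ring
      · intro h
        exact absurd (Finset.mem_univ _) h
end
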